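/- Let G be a simple graph on stations 0, 1, ..., N−1 whose edges come from a monotone matching of cable cars: distinct starting points, distinct finishing points, and a car starting higher finishes higher. Then any path in G between vertices i < j passes through strictly increasing vertex labels; in particular, G is acyclic. -/

import Mathlib

theorem stmt_9 (N : ℕ) (cars : Finset (Fin N × Fin N))
    (hlt : ∀ p ∈ cars, p.1 < p.2)
    (hstart : ∀ p ∈ cars, ∀ q ∈ cars, p.1 = q.1 → p = q)
    (hend : ∀ p ∈ cars, ∀ q ∈ cars, p.2 = q.2 → p = q)
    (hmono : ∀ p ∈ cars, ∀ q ∈ cars, p.1 < q.1 → p.2 < q.2)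
    (G : SimpleGraph (Fin N))
    (hG : ∀ x y : Fin N, G.Adj x y ↔ ((x, y) ∈ cars ∨ (y, x) ∈ cars)) :
    (∀ i j : Fin N, i < j → ∀ p : G.Walk i j, p.IsPath →
        p.support.Chain' (· < ·)) ∧
    G.IsAcyclic := by
  have key : ∀ (a b : Fin N) (p : G.Walk a b), p.IsPath →
      ∀ x : Fin N, (x, a) ∈ cars → x ∉ p.support →
      List.Chain' (· < ·) p.support := by
    intro a b p
    induction p with
    | nil => intro _ x _ _; exact List.isChain_singleton _
    | @cons u v w h q ih =>
      intro hp x hx hxs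
      rw [SimpleGraph.Walk.cons_isPath_iff] at hp
      obtain ⟨hq, hus⟩ := hp
      rcases (hG u v).mp h with hc | hc
      · have hchain := ih hq u hc hus
        rw [SimpleGraph.Walk.support_cons, q.support_eq_cons]
        rw [q.support_eq_cons] at hchain
        exact List.IsChain.cons_cons (hlt _ hc) hchain
      · exfalso
        have heq := hend _ hc _ hx rfl
        have hv : v = x := congrArg Prod.fst heq
        exact hxs (by
          rw [SimpleGraph.Walk.support_cons]
          exact List.mem_cons_of_mem _ (hv ▸ q.start_mem_support))
  have key2 : ∀ (a b : Fin N) (p : G.Walk a b), p.IsPath →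
      ∀ x : Fin N, (a, x) ∈ cars → x ∉ p.support →
      List.Chain' (· > ·) p.support := by
    intro a b p
    induction p with
    | nil => intro _ x _ _; exact List.isChain_singleton _
    | @cons u v w h q ih =>
      intro hp x hx hxs
      rw [SimpleGraph.Walk.cons_isPath_iff] at hp
      obtain ⟨hq, hus⟩ := hp
      rcases (hG u v).mp h with hc | hc
      · exfalso
        have heq := hstart _ hc _ hx rfl
        have hv : v = x := congrArg Prod.snd heq
        exact hxs (by
          rw [SimpleGraph.Walk.support_cons]
          exact List.mem_cons_of_mem _ (hv ▸ q.start_mem_support))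
      · have hchain := ih hq u hc hus
        rw [SimpleGraph.Walk.support_cons, q.support_eq_cons]
        rw [q.support_eq_cons] at hchain
        exact List.IsChain.cons_cons (hlt _ hc) hchain
  have part1 : ∀ i j : Fin N, i < j → ∀ p : G.Walk i j, p.IsPath →
      List.Chain' (· < ·) p.support := by
    intro i j hij p hp
    cases p with
    | nil => exact absurd rfl hij.ne
    | @cons _ v _ h q =>
      rw [SimpleGraph.Walk.cons_isPath_iff] at hp
      obtain ⟨hq, his⟩ := hp
      rcases (hG i v).mp h with hc | hc
      · have hchain := key _ _ q hq i hc his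
        rw [SimpleGraph.Walk.support_cons, q.support_eq_cons]
        rw [q.support_eq_cons] at hchain
        exact List.IsChain.cons_cons (hlt _ hc) hchain
      · exfalso
        have hchain := key2 _ _ q hq i hc his
        have hfull : List.Chain' (· > ·) (i :: q.support) := by
          rw [q.support_eq_cons]
          rw [q.support_eq_cons] at hchain
          exact List.IsChain.cons_cons (hlt _ hc) hchain
        have hpw := (List.isChain_iff_pairwise).mp hfull
        have hij' : i > j :=
          (List.pairwise_cons.mp hpw).1 j q.end_mem_support
        exact absurd hij (not_lt.mpr hij'.le)
  have loop_nil : ∀ (a : Fin N) (p : G.Walk a a), p.IsPath → p.length = 0 := by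
    intro a p hp
    cases p with
    | nil => rfl
    | @cons _ v _ h q =>
      rw [SimpleGraph.Walk.cons_isPath_iff] at hp
      exact absurd q.end_mem_support hp.2
  have first_step : ∀ (a b : Fin N) (p : G.Walk a b), p.IsPath → a < b →
      ∃ (u : Fin N) (h : G.Adj a u) (q : G.Walk u b),
        p = SimpleGraph.Walk.cons h q ∧ (a, u) ∈ cars := by
    intro a b p hp hab
    have hchain := part1 a b hab p hp
    cases p with
    | nil => exact absurd rfl hab.ne
    | @cons _ v _ h q =>
      rcases (hG a v).mp h with hc | hc
      · exact ⟨v, h, q, rfl, hc⟩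
      · exfalso
        rw [SimpleGraph.Walk.support_cons, q.support_eq_cons] at hchain
        exact absurd (hlt _ hc) (not_lt.mpr (List.isChain_cons_cons.mp hchain).1.le)
  refine ⟨part1, ?_⟩
  intro v c hcyc
  have h3 := hcyc.three_le_length
  cases c with
  | nil => simp at h3
  | @cons _ w _ h q =>
    rw [SimpleGraph.Walk.cons_isCycle_iff] at hcyc
    obtain ⟨hq, -⟩ := hcyc
    rcases lt_trichotomy v w with hvw | hvw | hvw
    · have hc : (v, w) ∈ cars := by
        rcases (hG v w).mp h with hc | hc
        · exact hc
        · exact absurd (hlt _ hc) (not_lt.mpr hvw.le)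
      obtain ⟨u, h', q', hq', hcu⟩ := first_step v w q.reverse hq.reverse hvw
      have hu : u = w := congrArg Prod.snd (hstart _ hcu _ hc rfl)
      subst hu
      have hq'path : q'.IsPath := by
        have := hq.reverse
        rw [hq', SimpleGraph.Walk.cons_isPath_iff] at this
        exact this.1
      have hlen : q.reverse.length = 1 := by
        rw [hq', SimpleGraph.Walk.length_cons, loop_nil _ _ hq'path]
      rw [SimpleGraph.Walk.length_reverse] at hlen
      rw [SimpleGraph.Walk.length_cons, hlen] at h3
      omega
    · exact h.ne hvw
    · have hc : (w, v) ∈ cars := by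
        rcases (hG v w).mp h with hc | hc
        · exact absurd (hlt _ hc) (not_lt.mpr hvw.le)
        · exact hc
      obtain ⟨u, h', q', hq', hcu⟩ := first_step w v q hq hvw
      have hu : u = v := congrArg Prod.snd (hstart _ hcu _ hc rfl)
      subst hu
      have hq'path : q'.IsPath := by
        rw [hq', SimpleGraph.Walk.cons_isPath_iff] at hq
        exact hq.1
      have hlen : q.length = 1 := by
        rw [hq', SimpleGraph.Walk.length_cons, loop_nil _ _ hq'path]
      rw [SimpleGraph.Walk.length_cons, hlen] at h3
      omega
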